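/- arXiv:1602.04523 — 3 statements merged into one kernel-verified Lean document; each statement's English description precedes it below -/
import Mathlib

section
/- Let Π be nested and dense, let ω ∈ D([0,T],ℝ₊^d) have finite quadratic variation [ω] along Π, fix n₀ ≥ 1 and vectors λ₀, ..., λ_{m(n₀)−1} ∈ ℝ^d, and let φ(t) := Σ_{i=0}^{m(n₀)−1} λ_i 1_{(t^{n₀}_i, t^{n₀}_{i+1}]}(t) be the corresponding simple predictable process. Then the real-valued path X(t) := Σ_{i=0}^{m(n₀)−1} λ_i · (ω(t^{n₀}_{i+1} ∧ t) − ω(t^{n₀}_i ∧ t)), t ∈ [0,T] (the pathwise integral of φ against ω), has finite quadratic variation along Π and the isometry identity holds: [X](T) = Σ_{i=0}^{m(n₀)−1} tr( λ_i λ_i^T ( [ω](t^{n₀}_{i+1}) − [ω](t^{n₀}_i) ) ). -/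
open Filter Topology Set MeasureTheory

noncomputable section

/-- Paths with values in `ℝ^d`, restricted in practice to the time interval `[0,T]`. -/
abbrev PathD (d : ℕ) := ℝ → (Fin d → ℝ)

/-- A sequence of partitions of `[0,T]` with mesh tending to `0`. -/
structure PartitionSeq (T : ℝ) where
  m : ℕ → ℕ
  t : ℕ → ℕ → ℝ
  m_pos : ∀ n, 0 < m n
  first : ∀ n, t n 0 = 0
  last : ∀ n, t n (m n) = T
  mono : ∀ n, ∀ i < m n, t n i < t n (i + 1)
  mesh : Tendsto (fun n => ⨆ i : Fin (m n), (t n (i + 1) - t n i)) atTop (nhds 0)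

variable {d : ℕ}

/-- The path `ω` stopped at time `t` : `ω_t = ω(· ∧ t)`. -/
def stopAt (ω : PathD d) (t : ℝ) : PathD d := fun s => ω (min s t)

/-- The path `ω_{t-} = ω 1_{[0,t)} + ω(t-) 1_{[t,T]}`. -/
def stopBefore (ω : PathD d) (t : ℝ) : PathD d :=
  fun s => if s < t then ω s else Function.leftLim ω t

/-- The vertical perturbation `ω_t^e = ω_t + e 1_{[t,T]}` of the stopped path. -/
def vert (ω : PathD d) (t : ℝ) (e : Fin d → ℝ) : PathD d :=
  fun s => if t ≤ s then ω (min s t) + e else ω (min s t)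

/-- The jump `Δω(t) = ω(t) - ω(t-)`. -/
def pathJump (ω : PathD d) (t : ℝ) : Fin d → ℝ := ω t - Function.leftLim ω t

/-- The distance `d_∞` on stopped paths. -/
def dInfty (T : ℝ) (p q : ℝ × PathD d) : ℝ :=
  (⨆ u : Icc (0:ℝ) T, ‖stopAt p.2 p.1 (u : ℝ) - stopAt q.2 q.1 (u : ℝ)‖) + |p.1 - q.1|

/-- `ω` is càdlàg on `[0,T]`: right-continuous with left limits. -/
def IsCadlagOn {E : Type*} [TopologicalSpace E] (ω : ℝ → E) (T : ℝ) : Prop :=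
  (∀ s ∈ Ico (0:ℝ) T, ContinuousWithinAt ω (Ici s) s) ∧
  (∀ s ∈ Ioc (0:ℝ) T, ∃ l : E, Tendsto ω (nhdsWithin s (Iio s)) (nhds l))

/-- Left-continuity of a non-anticipative functional for the distance `d_∞`. -/
def LeftContinuousNAF (T : ℝ) (G : ℝ → PathD d → ℝ) : Prop :=
  ∀ t ∈ Icc (0:ℝ) T, ∀ ω : PathD d, IsCadlagOn ω T → ∀ ε > (0:ℝ), ∃ η > (0:ℝ),
    ∀ h ∈ Icc (0:ℝ) t, ∀ ω' : PathD d, IsCadlagOn ω' T →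
      dInfty T (t, ω) (t - h, ω') < η → |G t ω - G (t - h) ω'| < ε

/-- Joint continuity of a non-anticipative functional for the distance `d_∞`. -/
def JointContinuousNAF (T : ℝ) (G : ℝ → PathD d → ℝ) : Prop :=
  ∀ t ∈ Icc (0:ℝ) T, ∀ ω : PathD d, IsCadlagOn ω T → ∀ ε > (0:ℝ), ∃ η > (0:ℝ),
    ∀ t' ∈ Icc (0:ℝ) T, ∀ ω' : PathD d, IsCadlagOn ω' T →
      dInfty T (t, ω) (t', ω') < η → |G t ω - G t' ω'| < ε

/-- The boundedness-preserving property of a non-anticipative functional. -/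
def BoundednessPreserving (T : ℝ) (G : ℝ → PathD d → ℝ) : Prop :=
  ∀ K : Set (Fin d → ℝ), IsCompact K → ∀ t₀ ∈ Icc (0:ℝ) T, ∃ C > (0:ℝ),
    ∀ t ∈ Icc (0:ℝ) t₀, ∀ ω : PathD d, (∀ u ∈ Icc (0:ℝ) t, ω u ∈ K) → |G t ω| ≤ C

/-- The continuous linear form `e ↦ Σ_j g j * e j` on `ℝ^d`. -/
def dotCLM {d : ℕ} (g : Fin d → ℝ) : ((Fin d) → ℝ) →L[ℝ] ℝ :=
  ∑ j : Fin d, g j • ContinuousLinearMap.proj j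

/-- A non-anticipative functional of class `C^{1,2}_b`, together with its horizontal
derivative `DF`, vertical gradient `gradF` and vertical Hessian `hessF`. -/
structure C12b (T : ℝ) (d : ℕ) where
  F : ℝ → PathD d → ℝ
  DF : ℝ → PathD d → ℝ
  gradF : ℝ → PathD d → (Fin d → ℝ)
  hessF : ℝ → PathD d → Matrix (Fin d) (Fin d) ℝ
  nonanticipative : ∀ t ∈ Icc (0:ℝ) T, ∀ ω : PathD d, IsCadlagOn ω T →
    F t ω = F t (stopAt ω t)
  horiz : ∀ t ∈ Ico (0:ℝ) T, ∀ ω : PathD d, IsCadlagOn ω T →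
    Tendsto (fun h : ℝ => (F (t + h) (stopAt ω t) - F t (stopAt ω t)) / h)
      (nhdsWithin 0 (Ioi 0)) (nhds (DF t ω))
  vertDeriv : ∀ t ∈ Icc (0:ℝ) T, ∀ ω : PathD d, IsCadlagOn ω T →
    HasFDerivAt (fun e : Fin d → ℝ => F t (vert ω t e)) (dotCLM (gradF t ω)) 0
  vertDeriv2 : ∀ t ∈ Icc (0:ℝ) T, ∀ ω : PathD d, IsCadlagOn ω T → ∀ a : Fin d,
    HasFDerivAt (fun e : Fin d → ℝ => gradF t (vert ω t e) a)
      (dotCLM (fun b => hessF t ω a b)) 0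
  F_leftCont : LeftContinuousNAF T F
  gradF_leftCont : ∀ a : Fin d, LeftContinuousNAF T (fun t ω => gradF t ω a)
  hessF_leftCont : ∀ a b : Fin d, LeftContinuousNAF T (fun t ω => hessF t ω a b)
  DF_fixedTimeCont : ∀ t ∈ Icc (0:ℝ) T, ∀ ω : PathD d, IsCadlagOn ω T →
    ∀ ε > (0:ℝ), ∃ η > (0:ℝ), ∀ ω' : PathD d, IsCadlagOn ω' T →
      (⨆ u : Icc (0:ℝ) T, ‖stopAt ω t (u : ℝ) - stopAt ω' t (u : ℝ)‖) < η →
      |DF t ω - DF t ω'| < ε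
  DF_bp : BoundednessPreserving T DF
  gradF_bp : ∀ a : Fin d, BoundednessPreserving T (fun t ω => gradF t ω a)
  hessF_bp : ∀ a b : Fin d, BoundednessPreserving T (fun t ω => hessF t ω a b)

/-- The piecewise-constant approximation
`ωⁿ = Σ_i ω(tⁿ_{i+1}-) 1_{[tⁿ_i, tⁿ_{i+1})} + ω(T) 1_{{T}}` of `ω` along the `n`-th partition. -/
def pcApprox (T : ℝ) (P : PartitionSeq T) (ω : PathD d) (n : ℕ) : PathD d :=
  fun s =>
    if h : ∃ i, i < P.m n ∧ P.t n i ≤ s ∧ s < P.t n (i + 1) then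
      Function.leftLim ω (P.t n (h.choose + 1))
    else ω T

/-- The path `(ωⁿ_{tⁿ_i -})^e`: equal to `ωⁿ` on `[0, tⁿ_i)` and to `ω(tⁿ_i -) + e`
on `[tⁿ_i, T]`. -/
def pcVert (T : ℝ) (P : PartitionSeq T) (ω : PathD d) (n i : ℕ) (e : Fin d → ℝ) : PathD d :=
  fun s => if s < P.t n i then pcApprox T P ω n s else Function.leftLim ω (P.t n i) + e

end

section AuxPartition

open Filter Topology Set

variable {T : ℝ}

theorem PartitionSeq.t_lt_t (P : PartitionSeq T) {n i j : ℕ} (hij : i < j) (hj : j ≤ P.m n) :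
    P.t n i < P.t n j := by
  induction j with
  | zero => omega
  | succ j ih =>
    rcases Nat.lt_succ_iff_lt_or_eq.mp hij with h | h
    · exact (ih h (by omega)).trans (P.mono n j (by omega))
    · rw [h]; exact P.mono n j (by omega)

theorem PartitionSeq.t_le_t (P : PartitionSeq T) {n i j : ℕ} (hij : i ≤ j) (hj : j ≤ P.m n) :
    P.t n i ≤ P.t n j := by
  rcases Nat.lt_or_ge i j with h | h
  · exact (P.t_lt_t h hj).le
  · have : i = j := le_antisymm hij h
    subst this; rfl

theorem PartitionSeq.t_nonneg (P : PartitionSeq T) {n i : ℕ} (hi : i ≤ P.m n) :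
    0 ≤ P.t n i := by
  have := P.t_le_t (Nat.zero_le i) hi; rwa [P.first] at this

theorem PartitionSeq.t_le_T (P : PartitionSeq T) {n i : ℕ} (hi : i ≤ P.m n) :
    P.t n i ≤ T := by
  have := P.t_le_t hi le_rfl; rwa [P.last] at this

theorem PartitionSeq.t_mem (P : PartitionSeq T) {n i : ℕ} (hi : i ≤ P.m n) :
    P.t n i ∈ Icc (0:ℝ) T := ⟨P.t_nonneg hi, P.t_le_T hi⟩

/-- transitivity of the nesting property -/
theorem PartitionSeq.embed (P : PartitionSeq T)
    (hnested : ∀ n : ℕ, ∀ i ≤ P.m n, ∃ j ≤ P.m (n + 1), P.t (n + 1) j = P.t n i)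
    {n₀ n : ℕ} (hn : n₀ ≤ n) : ∀ k ≤ P.m n₀, ∃ j ≤ P.m n, P.t n j = P.t n₀ k := by
  induction n, hn using Nat.le_induction with
  | base => exact fun k hk => ⟨k, hk, rfl⟩
  | succ n hn ih =>
    intro k hk
    obtain ⟨j, hj, hje⟩ := ih k hk
    obtain ⟨j', hj', hj'e⟩ := hnested n j hj
    exact ⟨j', hj', by rw [hj'e, hje]⟩

/-- every interval of a finer partition lies in a block of the coarser one -/
theorem PartitionSeq.block (P : PartitionSeq T) {n₀ n : ℕ}
    (hemb : ∀ k ≤ P.m n₀, ∃ j ≤ P.m n, P.t n j = P.t n₀ k)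
    {i : ℕ} (hi : i < P.m n) :
    ∃ k < P.m n₀, P.t n₀ k ≤ P.t n i ∧ P.t n i < P.t n₀ (k + 1) ∧
      P.t n (i + 1) ≤ P.t n₀ (k + 1) := by
  set p : ℕ → Prop := fun k => P.t n₀ k ≤ P.t n i with hp
  have hp0 : p 0 := by rw [hp]; simp only [P.first]; exact P.t_nonneg hi.le
  set k := Nat.findGreatest p (P.m n₀ - 1) with hk
  have hkle : k ≤ P.m n₀ - 1 := Nat.findGreatest_le _
  have hklt : k < P.m n₀ := lt_of_le_of_lt hkle (by have := P.m_pos n₀; omega)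
  have hpk : p k := Nat.findGreatest_spec (Nat.zero_le _) hp0
  have hiT : P.t n i < T := by
    have := P.t_lt_t hi le_rfl; rwa [P.last] at this
  have hlt : P.t n i < P.t n₀ (k + 1) := by
    rcases Nat.lt_or_ge (k + 1) (P.m n₀) with h | h
    · by_contra hc
      push_neg at hc
      exact Nat.findGreatest_is_greatest (Nat.lt_succ_self k) (by omega) hc
    · have : k + 1 = P.m n₀ := by omega
      rw [this, P.last]; exact hiT
  -- t n₀ (k+1) is a point of π^n
  obtain ⟨j, hj, hje⟩ := hemb (k + 1) hklt
  have hij : i < j := by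
    by_contra hc
    push_neg at hc
    exact absurd (hje ▸ P.t_le_t hc hi.le) (not_le.mpr hlt)
  have : P.t n (i + 1) ≤ P.t n j := P.t_le_t hij hj
  exact ⟨k, hklt, hpk, hlt, by rw [← hje]; exact this⟩

/-- uniqueness of the block -/
theorem PartitionSeq.block_unique (P : PartitionSeq T) {n₀ : ℕ} {s : ℝ} {k k' : ℕ}
    (hk : k < P.m n₀) (hk' : k' < P.m n₀)
    (h1 : P.t n₀ k ≤ s) (h2 : s < P.t n₀ (k + 1))
    (h1' : P.t n₀ k' ≤ s) (h2' : s < P.t n₀ (k' + 1)) : k = k' := by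
  by_contra hne
  rcases Nat.lt_or_ge k k' with h | h
  · have : P.t n₀ (k + 1) ≤ P.t n₀ k' := P.t_le_t h hk'.le
    linarith
  · have hlt : k' < k := by omega
    have : P.t n₀ (k' + 1) ≤ P.t n₀ k := P.t_le_t hlt hk.le
    linarith

end AuxPartition

section AuxX

open Filter Topology Set

variable {T : ℝ} {d : ℕ}

/-- On a block `[t_k, t_{k+1}]` of the coarse partition, increments of the simple integral
`X` are given by `λ_k · (ω v - ω u)`. -/
theorem simpleIntegral_incr (P : PartitionSeq T) (n₀ : ℕ) (lam : ℕ → (Fin d → ℝ))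
    (ω : PathD d) (X : ℝ → ℝ)
    (hX : ∀ t : ℝ, X t = ∑ i ∈ Finset.range (P.m n₀),
        ∑ a : Fin d, lam i a * (ω (min (P.t n₀ (i + 1)) t) a - ω (min (P.t n₀ i) t) a))
    {k : ℕ} (hk : k < P.m n₀) {u v : ℝ} (hu : P.t n₀ k ≤ u) (huv : u ≤ v)
    (hv : v ≤ P.t n₀ (k + 1)) :
    X v - X u = ∑ a : Fin d, lam k a * (ω v a - ω u a) := by
  rw [hX v, hX u, ← Finset.sum_sub_distrib]
  rw [Finset.sum_eq_single_of_mem k (Finset.mem_range.mpr hk)]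
  · rw [← Finset.sum_sub_distrib]
    have h1 : min (P.t n₀ (k + 1)) v = v := min_eq_right hv
    have h2 : min (P.t n₀ (k + 1)) u = u := min_eq_right (huv.trans hv)
    have h3 : min (P.t n₀ k) v = P.t n₀ k := min_eq_left (hu.trans huv)
    have h4 : min (P.t n₀ k) u = P.t n₀ k := min_eq_left hu
    rw [h1, h2, h3, h4]
    apply Finset.sum_congr rfl
    intro a _
    ring
  · intro i hi hne
    rw [Finset.mem_range] at hi
    rcases Nat.lt_or_ge i k with h | h
    · -- i < k : everything frozen at t_{i+1}, t_i
      have hik : i + 1 ≤ k := h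
      have hle : P.t n₀ (i + 1) ≤ P.t n₀ k := P.t_le_t hik hk.le
      have h1 : min (P.t n₀ (i + 1)) v = P.t n₀ (i + 1) := min_eq_left (by linarith)
      have h2 : min (P.t n₀ (i + 1)) u = P.t n₀ (i + 1) := min_eq_left (by linarith)
      have hle' : P.t n₀ i ≤ P.t n₀ k := P.t_le_t h.le hk.le
      have h3 : min (P.t n₀ i) v = P.t n₀ i := min_eq_left (by linarith)
      have h4 : min (P.t n₀ i) u = P.t n₀ i := min_eq_left (by linarith)
      rw [h1, h2, h3, h4, sub_self]
    · -- i > k : not yet started, increments are ω v - ω u on both endpoints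
      have hki : k + 1 ≤ i := by omega
      have hge : P.t n₀ (k + 1) ≤ P.t n₀ i := P.t_le_t hki hi.le
      have hge' : P.t n₀ (k + 1) ≤ P.t n₀ (i + 1) := P.t_le_t (by omega) hi
      have h1 : min (P.t n₀ (i + 1)) v = v := min_eq_right (by linarith)
      have h2 : min (P.t n₀ (i + 1)) u = u := min_eq_right (by linarith)
      have h3 : min (P.t n₀ i) v = v := min_eq_right (by linarith)
      have h4 : min (P.t n₀ i) u = u := min_eq_right (by linarith)
      rw [h1, h2, h3, h4]
      simp

end AuxX

section AuxIncr

open Filter Topology Set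

variable {T : ℝ} {d : ℕ}

theorem incr_at_point_tendsto_zero (P : PartitionSeq T) (ω : PathD d) (hω : IsCadlagOn ω T)
    {n₀ : ℕ} {w : ℝ} (hw0 : 0 ≤ w) (hwT : w ≤ T)
    (hpt : ∀ n ≥ n₀, ∃ j ≤ P.m n, P.t n j = w) (a b : Fin d) :
    Tendsto (fun n => ∑ i ∈ Finset.range (P.m n),
      if P.t n i = w then
        (ω (P.t n (i+1)) a - ω (P.t n i) a) * (ω (P.t n (i+1)) b - ω (P.t n i) b)
      else 0) atTop (nhds 0) := by
  rcases eq_or_lt_of_le hwT with rfl | hwT'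
  · -- w = T : the sum is identically 0
    have hz : ∀ n, (∑ i ∈ Finset.range (P.m n),
        if P.t n i = w then
          (ω (P.t n (i+1)) a - ω (P.t n i) a) * (ω (P.t n (i+1)) b - ω (P.t n i) b)
        else 0) = 0 := by
      intro n
      apply Finset.sum_eq_zero
      intro i hi
      rw [Finset.mem_range] at hi
      rw [if_neg]
      have := P.t_lt_t hi le_rfl
      rw [P.last] at this
      exact ne_of_lt this
    simp only [hz]
    exact tendsto_const_nhds
  · -- w < T
    classical
    set A : ℕ → ℝ := fun n =>
      if h : ∃ j, j < P.m n ∧ P.t n j = w then P.t n (h.choose + 1) else w with hA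
    have hex : ∀ n ≥ n₀, ∃ j, j < P.m n ∧ P.t n j = w := by
      intro n hn
      obtain ⟨j, hj, hje⟩ := hpt n hn
      refine ⟨j, ?_, hje⟩
      rcases Nat.lt_or_ge j (P.m n) with h | h
      · exact h
      · exfalso
        have : j = P.m n := le_antisymm hj h
        rw [this, P.last] at hje
        exact absurd hje (ne_of_gt hwT')
    have hlo : ∀ n, w ≤ A n := by
      intro n
      by_cases h : ∃ j, j < P.m n ∧ P.t n j = w
      · simp only [hA]
        rw [dif_pos h]
        have h1 := h.choose_spec.1
        have h2 := h.choose_spec.2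
        have h3 := P.mono n _ h1
        rw [h2] at h3
        exact h3.le
      · simp only [hA]
        rw [dif_neg h]
    have hup : ∀ᶠ n in atTop, A n ≤ w + ⨆ i : Fin (P.m n), (P.t n (↑i + 1) - P.t n ↑i) := by
      filter_upwards [eventually_ge_atTop n₀] with n hn
      have h := hex n hn
      simp only [hA]
      rw [dif_pos h]
      have h1 := h.choose_spec.1
      have h2 := h.choose_spec.2
      have : P.t n (h.choose + 1) - P.t n h.choose ≤
          ⨆ i : Fin (P.m n), (P.t n (↑i + 1) - P.t n ↑i) :=
        le_ciSup (f := fun i : Fin (P.m n) => P.t n (↑i + 1) - P.t n ↑i)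
          (Set.Finite.bddAbove (Set.finite_range _)) ⟨h.choose, h1⟩
      rw [h2] at this
      linarith
    have hAt : Tendsto A atTop (nhds w) := by
      have hmesh : Tendsto (fun n => w + ⨆ i : Fin (P.m n), (P.t n (↑i + 1) - P.t n ↑i))
          atTop (nhds w) := by
        have : Tendsto (fun n : ℕ => w + ⨆ i : Fin (P.m n), (P.t n (↑i + 1) - P.t n ↑i))
            atTop (nhds (w + 0)) := Tendsto.add tendsto_const_nhds P.mesh
        simpa using this
      exact tendsto_of_tendsto_of_tendsto_of_le_of_le' tendsto_const_nhds hmesh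
        (Eventually.of_forall hlo) hup
    have hAw : Tendsto A atTop (nhdsWithin w (Ici w)) :=
      tendsto_nhdsWithin_iff.mpr ⟨hAt, Eventually.of_forall fun n => hlo n⟩
    have hcont : ContinuousWithinAt ω (Ici w) w := hω.1 w ⟨hw0, hwT'⟩
    have hωA : Tendsto (fun n => ω (A n)) atTop (nhds (ω w)) := hcont.tendsto.comp hAw
    have hcomp : ∀ c : Fin d, Tendsto (fun n => ω (A n) c - ω w c) atTop (nhds 0) := by
      intro c
      have := ((continuous_apply c).tendsto (ω w)).comp hωA
      have := this.sub (tendsto_const_nhds (x := ω w c))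
      simpa using this
    have hg : Tendsto (fun n => (ω (A n) a - ω w a) * (ω (A n) b - ω w b)) atTop (nhds 0) := by
      have := (hcomp a).mul (hcomp b)
      simpa using this
    apply hg.congr'
    filter_upwards [eventually_ge_atTop n₀] with n hn
    have h := hex n hn
    have h1 := h.choose_spec.1
    have h2 := h.choose_spec.2
    rw [Finset.sum_eq_single_of_mem h.choose (Finset.mem_range.mpr h1)]
    · rw [if_pos h2, h2]
      simp only [hA]
      rw [dif_pos h]
    · intro i hi hne
      rw [Finset.mem_range] at hi
      rw [if_neg]
      intro hc
      apply hne
      rcases Nat.lt_or_ge i h.choose with hlt | hge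
      · have h3 := P.t_lt_t hlt h1.le
        rw [hc, h2] at h3
        exact absurd h3 (lt_irrefl w)
      · rcases Nat.lt_or_ge h.choose i with hlt | hge'
        · have h3 := P.t_lt_t hlt hi.le
          rw [hc, h2] at h3
          exact absurd h3 (lt_irrefl w)
        · omega

end AuxIncr

section AuxBlock

open Filter Topology Set

variable {T : ℝ} {d : ℕ}

theorem ite_eq_ite_le (s u g : ℝ) :
    (if s = u then g else 0) = (if u ≤ s then if s ≤ u then g else 0 else 0) := by
  rcases lt_trichotomy s u with h | h | h
  · rw [if_neg (ne_of_lt h), if_neg (not_le.mpr h)]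
  · rw [if_pos h, if_pos (ge_of_eq h), if_pos (le_of_eq h)]
  · rw [if_neg (ne_of_gt h), if_pos (le_of_lt h), if_neg (not_le.mpr h)]

theorem block_tendsto (P : PartitionSeq T) (ω : PathD d) (hω : IsCadlagOn ω T)
    (Q : ℝ → Matrix (Fin d) (Fin d) ℝ)
    (hQ : ∀ t ∈ Icc (0:ℝ) T, ∀ a b : Fin d,
      Tendsto (fun n => ∑ i ∈ Finset.range (P.m n),
        if P.t n i ≤ t then
          (ω (P.t n (i + 1)) a - ω (P.t n i) a) * (ω (P.t n (i + 1)) b - ω (P.t n i) b)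
        else 0) atTop (nhds (Q t a b)))
    {n₀ : ℕ}
    (hemb : ∀ n ≥ n₀, ∀ k ≤ P.m n₀, ∃ j ≤ P.m n, P.t n j = P.t n₀ k)
    {t : ℝ} (ht : t ∈ Icc (0:ℝ) T) {k : ℕ} (hk : k < P.m n₀) (a b : Fin d) :
    Tendsto (fun n => ∑ i ∈ Finset.range (P.m n),
      if P.t n₀ k ≤ P.t n i then (if P.t n i < P.t n₀ (k+1) then (if P.t n i ≤ t then
        (ω (P.t n (i + 1)) a - ω (P.t n i) a) * (ω (P.t n (i + 1)) b - ω (P.t n i) b)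
        else 0) else 0) else 0) atTop
      (nhds (Q (max (P.t n₀ k) (min t (P.t n₀ (k+1)))) a b - Q (P.t n₀ k) a b)) := by
  set u := P.t n₀ k with hud
  set v := P.t n₀ (k+1) with hvd
  have huv : u < v := P.mono n₀ k hk
  have hu0 : 0 ≤ u := P.t_nonneg hk.le
  have hvT : v ≤ T := P.t_le_T hk
  have humem : u ∈ Icc (0:ℝ) T := ⟨hu0, huv.le.trans hvT⟩
  have hvmem : v ∈ Icc (0:ℝ) T := ⟨hu0.trans huv.le, hvT⟩
  have hptu : ∀ n ≥ n₀, ∃ j ≤ P.m n, P.t n j = u := fun n hn => hemb n hn k hk.le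
  have hptv : ∀ n ≥ n₀, ∃ j ≤ P.m n, P.t n j = v := fun n hn => hemb n hn (k+1) hk
  rcases lt_or_ge t u with htu | hut
  · -- t < u : empty block
    have hmax : max u (min t v) = u := max_eq_left ((min_le_left _ _).trans htu.le)
    rw [hmax, sub_self]
    have hz : ∀ n, (∑ i ∈ Finset.range (P.m n),
        if u ≤ P.t n i then (if P.t n i < v then (if P.t n i ≤ t then
          (ω (P.t n (i + 1)) a - ω (P.t n i) a) * (ω (P.t n (i + 1)) b - ω (P.t n i) b)
          else 0) else 0) else 0) = 0 := by
      intro n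
      apply Finset.sum_eq_zero
      intro i _
      split_ifs with h1 h2 h3
      · exact absurd (h1.trans h3) (not_le.mpr htu)
      · rfl
      · rfl
      · rfl
    simp only [hz]
    exact tendsto_const_nhds
  rcases lt_or_ge t v with htv | hvt
  · -- u ≤ t < v
    have hmax : max u (min t v) = t := by
      rw [min_eq_left htv.le, max_eq_right hut]
    rw [hmax]
    have hcomb := ((hQ t ht a b).sub (hQ u humem a b)).add
      (incr_at_point_tendsto_zero P ω hω hu0 humem.2 hptu a b)
    have key : ∀ n, (∑ i ∈ Finset.range (P.m n),
          if P.t n i ≤ t then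
            (ω (P.t n (i + 1)) a - ω (P.t n i) a) * (ω (P.t n (i + 1)) b - ω (P.t n i) b)
          else 0) -
        (∑ i ∈ Finset.range (P.m n),
          if P.t n i ≤ u then
            (ω (P.t n (i + 1)) a - ω (P.t n i) a) * (ω (P.t n (i + 1)) b - ω (P.t n i) b)
          else 0) +
        (∑ i ∈ Finset.range (P.m n),
          if P.t n i = u then
            (ω (P.t n (i + 1)) a - ω (P.t n i) a) * (ω (P.t n (i + 1)) b - ω (P.t n i) b)
          else 0) =
        (∑ i ∈ Finset.range (P.m n),
          if u ≤ P.t n i then (if P.t n i < v then (if P.t n i ≤ t then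
            (ω (P.t n (i + 1)) a - ω (P.t n i) a) * (ω (P.t n (i + 1)) b - ω (P.t n i) b)
            else 0) else 0) else 0) := by
      intro n
      rw [← Finset.sum_sub_distrib, ← Finset.sum_add_distrib]
      apply Finset.sum_congr rfl
      intro i _
      rw [ite_eq_ite_le]
      split_ifs <;> first | ring1 | (exfalso; linarith)
    have := hcomb.congr' (Eventually.of_forall key)
    simpa using this
  · -- v ≤ t : full block
    have hmax : max u (min t v) = v := by
      rw [min_eq_right hvt, max_eq_right huv.le]
    rw [hmax]
    have hcomb := (((hQ v hvmem a b).sub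
        (incr_at_point_tendsto_zero P ω hω (hu0.trans huv.le) hvT hptv a b)).sub
      (hQ u humem a b)).add
      (incr_at_point_tendsto_zero P ω hω hu0 humem.2 hptu a b)
    have key : ∀ n, ((∑ i ∈ Finset.range (P.m n),
          if P.t n i ≤ v then
            (ω (P.t n (i + 1)) a - ω (P.t n i) a) * (ω (P.t n (i + 1)) b - ω (P.t n i) b)
          else 0) -
        (∑ i ∈ Finset.range (P.m n),
          if P.t n i = v then
            (ω (P.t n (i + 1)) a - ω (P.t n i) a) * (ω (P.t n (i + 1)) b - ω (P.t n i) b)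
          else 0)) -
        (∑ i ∈ Finset.range (P.m n),
          if P.t n i ≤ u then
            (ω (P.t n (i + 1)) a - ω (P.t n i) a) * (ω (P.t n (i + 1)) b - ω (P.t n i) b)
          else 0) +
        (∑ i ∈ Finset.range (P.m n),
          if P.t n i = u then
            (ω (P.t n (i + 1)) a - ω (P.t n i) a) * (ω (P.t n (i + 1)) b - ω (P.t n i) b)
          else 0) =
        (∑ i ∈ Finset.range (P.m n),
          if u ≤ P.t n i then (if P.t n i < v then (if P.t n i ≤ t then
            (ω (P.t n (i + 1)) a - ω (P.t n i) a) * (ω (P.t n (i + 1)) b - ω (P.t n i) b)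
            else 0) else 0) else 0) := by
      intro n
      rw [← Finset.sum_sub_distrib, ← Finset.sum_sub_distrib, ← Finset.sum_add_distrib]
      apply Finset.sum_congr rfl
      intro i _
      rw [ite_eq_ite_le, ite_eq_ite_le]
      split_ifs <;> first | ring1 | (exfalso; linarith)
    have := hcomb.congr' (Eventually.of_forall key)
    simpa using this

end AuxBlock

section AuxDecomp

open Filter Topology Set

variable {T : ℝ} {d : ℕ}

theorem qsum_decomp (P : PartitionSeq T) (ω : PathD d)
    {n₀ : ℕ} (lam : ℕ → (Fin d → ℝ)) (X : ℝ → ℝ)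
    (hX : ∀ t : ℝ, X t = ∑ i ∈ Finset.range (P.m n₀),
        ∑ a : Fin d, lam i a * (ω (min (P.t n₀ (i + 1)) t) a - ω (min (P.t n₀ i) t) a))
    {n : ℕ} (hembn : ∀ k ≤ P.m n₀, ∃ j ≤ P.m n, P.t n j = P.t n₀ k) (t : ℝ) :
    (∑ i ∈ Finset.range (P.m n),
      if P.t n i ≤ t then (X (P.t n (i+1)) - X (P.t n i))^2 else 0)
    = ∑ k ∈ Finset.range (P.m n₀), ∑ a : Fin d, ∑ b : Fin d, lam k a * lam k b *
        (∑ i ∈ Finset.range (P.m n),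
          if P.t n₀ k ≤ P.t n i then (if P.t n i < P.t n₀ (k+1) then (if P.t n i ≤ t then
            (ω (P.t n (i + 1)) a - ω (P.t n i) a) * (ω (P.t n (i + 1)) b - ω (P.t n i) b)
            else 0) else 0) else 0) := by
  -- step 1 : per fine index i, the quadratic increment localizes to its unique block
  have step1 : ∀ i ∈ Finset.range (P.m n),
      (if P.t n i ≤ t then (X (P.t n (i+1)) - X (P.t n i))^2 else 0)
      = ∑ k ∈ Finset.range (P.m n₀),
          (if P.t n₀ k ≤ P.t n i then (if P.t n i < P.t n₀ (k+1) then (if P.t n i ≤ t then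
            ∑ a : Fin d, ∑ b : Fin d, lam k a * lam k b *
              ((ω (P.t n (i + 1)) a - ω (P.t n i) a) * (ω (P.t n (i + 1)) b - ω (P.t n i) b))
            else 0) else 0) else 0) := by
    intro i hi
    rw [Finset.mem_range] at hi
    obtain ⟨k₀, hk₀, hle, hlt, hle2⟩ := P.block hembn hi
    rw [Finset.sum_eq_single_of_mem k₀ (Finset.mem_range.mpr hk₀)]
    · rw [if_pos hle, if_pos hlt]
      by_cases hst : P.t n i ≤ t
      · rw [if_pos hst, if_pos hst]
        have hincr := simpleIntegral_incr P n₀ lam ω X hX hk₀ hle (P.mono n i hi).le hle2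
        rw [hincr, pow_two, Finset.sum_mul_sum]
        apply Finset.sum_congr rfl
        intro a _
        apply Finset.sum_congr rfl
        intro b _
        ring
      · rw [if_neg hst, if_neg hst]
    · intro k hk hne
      rw [Finset.mem_range] at hk
      by_cases h1 : P.t n₀ k ≤ P.t n i
      · rw [if_pos h1]
        by_cases h2 : P.t n i < P.t n₀ (k+1)
        · exact absurd (P.block_unique hk hk₀ h1 h2 hle hlt) hne
        · rw [if_neg h2]
      · rw [if_neg h1]
  rw [Finset.sum_congr rfl step1, Finset.sum_comm]
  apply Finset.sum_congr rfl
  intro k _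
  -- push the a,b sums and the constants through the indicators
  have step2 : ∀ i ∈ Finset.range (P.m n),
      (if P.t n₀ k ≤ P.t n i then (if P.t n i < P.t n₀ (k+1) then (if P.t n i ≤ t then
          ∑ a : Fin d, ∑ b : Fin d, lam k a * lam k b *
            ((ω (P.t n (i + 1)) a - ω (P.t n i) a) * (ω (P.t n (i + 1)) b - ω (P.t n i) b))
          else 0) else 0) else 0)
      = ∑ a : Fin d, ∑ b : Fin d, lam k a * lam k b *
          (if P.t n₀ k ≤ P.t n i then (if P.t n i < P.t n₀ (k+1) then (if P.t n i ≤ t then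
            (ω (P.t n (i + 1)) a - ω (P.t n i) a) * (ω (P.t n (i + 1)) b - ω (P.t n i) b)
            else 0) else 0) else 0) := by
    intro i _
    split_ifs <;> simp
  rw [Finset.sum_congr rfl step2]
  rw [Finset.sum_comm]
  apply Finset.sum_congr rfl
  intro a _
  rw [Finset.sum_comm]
  apply Finset.sum_congr rfl
  intro b _
  rw [Finset.mul_sum]

end AuxDecomp

section AuxJump

open Filter Topology Set

variable {T : ℝ} {d : ℕ}

theorem PartitionSeq.blockIoc (P : PartitionSeq T) (n₀ : ℕ) {s : ℝ}
    (hs0 : 0 < s) (hsT : s ≤ T) :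
    ∃ k < P.m n₀, P.t n₀ k < s ∧ s ≤ P.t n₀ (k+1) := by
  set p : ℕ → Prop := fun k => P.t n₀ k < s with hp
  have hp0 : p 0 := by rw [hp]; simp only [P.first]; exact hs0
  set k := Nat.findGreatest p (P.m n₀ - 1) with hk
  have hkle : k ≤ P.m n₀ - 1 := Nat.findGreatest_le _
  have hklt : k < P.m n₀ := lt_of_le_of_lt hkle (by have := P.m_pos n₀; omega)
  have hpk : p k := Nat.findGreatest_spec (Nat.zero_le _) hp0
  refine ⟨k, hklt, hpk, ?_⟩
  rcases Nat.lt_or_ge (k + 1) (P.m n₀) with h | h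
  · by_contra hc
    push_neg at hc
    exact Nat.findGreatest_is_greatest (Nat.lt_succ_self k) (by omega) hc
  · have : k + 1 = P.m n₀ := by omega
    rw [this, P.last]; exact hsT

theorem PartitionSeq.blockIoc_unique (P : PartitionSeq T) {n₀ : ℕ} {s : ℝ} {k k' : ℕ}
    (hk : k < P.m n₀) (hk' : k' < P.m n₀)
    (h1 : P.t n₀ k < s) (h2 : s ≤ P.t n₀ (k + 1))
    (h1' : P.t n₀ k' < s) (h2' : s ≤ P.t n₀ (k' + 1)) : k = k' := by
  by_contra hne
  rcases Nat.lt_or_ge k k' with h | h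
  · have : P.t n₀ (k + 1) ≤ P.t n₀ k' := P.t_le_t h hk'.le
    linarith
  · have hlt : k' < k := by omega
    have : P.t n₀ (k' + 1) ≤ P.t n₀ k := P.t_le_t hlt hk.le
    linarith

theorem X_jump (P : PartitionSeq T) (ω : PathD d) (hω : IsCadlagOn ω T)
    (n₀ : ℕ) (lam : ℕ → (Fin d → ℝ)) (X : ℝ → ℝ)
    (hX : ∀ t : ℝ, X t = ∑ i ∈ Finset.range (P.m n₀),
        ∑ a : Fin d, lam i a * (ω (min (P.t n₀ (i + 1)) t) a - ω (min (P.t n₀ i) t) a))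
    {s : ℝ} (hs : s ∈ Ioc (0:ℝ) T) {k : ℕ} (hk : k < P.m n₀)
    (h1 : P.t n₀ k < s) (h2 : s ≤ P.t n₀ (k+1)) :
    X s - Function.leftLim X s = ∑ a : Fin d, lam k a * pathJump ω s a := by
  obtain ⟨l, hl⟩ := hω.2 s hs
  have hne : (nhdsWithin s (Iio s)) ≠ ⊥ := Filter.NeBot.ne inferInstance
  have hωl : Function.leftLim ω s = l := leftLim_eq_of_tendsto hl
  have hRHS : Tendsto (fun s' => X s - ∑ a : Fin d, lam k a * (ω s a - ω s' a))
      (nhdsWithin s (Iio s)) (nhds (X s - ∑ a : Fin d, lam k a * (ω s a - l a))) := by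
    apply Tendsto.const_sub
    apply tendsto_finset_sum
    intro a _
    exact ((tendsto_const_nhds.sub (((continuous_apply a).tendsto l).comp hl))).const_mul _
  have hev : ∀ᶠ s' in nhdsWithin s (Iio s),
      (X s - ∑ a : Fin d, lam k a * (ω s a - ω s' a)) = X s' := by
    have hmem : ∀ᶠ s' in nhdsWithin s (Iio s), P.t n₀ k < s' :=
      nhdsWithin_le_nhds (eventually_gt_nhds h1)
    filter_upwards [hmem, self_mem_nhdsWithin] with s' hs1 hs2
    have hincr := simpleIntegral_incr P n₀ lam ω X hX hk hs1.le (le_of_lt hs2) h2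
    linarith
  have hXl : Tendsto X (nhdsWithin s (Iio s))
      (nhds (X s - ∑ a : Fin d, lam k a * (ω s a - l a))) := hRHS.congr' hev
  have hXleft : Function.leftLim X s = X s - ∑ a : Fin d, lam k a * (ω s a - l a) :=
    leftLim_eq_of_tendsto hXl
  rw [hXleft]
  simp only [pathJump, hωl, Pi.sub_apply]
  ring

theorem X_jump_sq (P : PartitionSeq T) (ω : PathD d) (hω : IsCadlagOn ω T)
    (n₀ : ℕ) (lam : ℕ → (Fin d → ℝ)) (X : ℝ → ℝ)
    (hX : ∀ t : ℝ, X t = ∑ i ∈ Finset.range (P.m n₀),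
        ∑ a : Fin d, lam i a * (ω (min (P.t n₀ (i + 1)) t) a - ω (min (P.t n₀ i) t) a))
    {s : ℝ} (hs : s ∈ Ioc (0:ℝ) T) :
    (X s - Function.leftLim X s)^2
    = ∑ k ∈ Finset.range (P.m n₀), ∑ a : Fin d, ∑ b : Fin d, lam k a * lam k b *
        (if P.t n₀ k < s then (if s ≤ P.t n₀ (k+1) then
          pathJump ω s a * pathJump ω s b else 0) else 0) := by
  obtain ⟨k₀, hk₀, h1, h2⟩ := P.blockIoc n₀ hs.1 hs.2
  have key : ∀ k ∈ Finset.range (P.m n₀),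
      (∑ a : Fin d, ∑ b : Fin d, lam k a * lam k b *
        (if P.t n₀ k < s then (if s ≤ P.t n₀ (k+1) then
          pathJump ω s a * pathJump ω s b else 0) else 0))
      = (if P.t n₀ k < s then (if s ≤ P.t n₀ (k+1) then
          (∑ a : Fin d, ∑ b : Fin d, lam k a * lam k b *
            (pathJump ω s a * pathJump ω s b)) else 0) else 0) := by
    intro k _
    split_ifs <;> simp
  rw [Finset.sum_congr rfl key]
  rw [Finset.sum_eq_single_of_mem k₀ (Finset.mem_range.mpr hk₀)]
  · rw [if_pos h1, if_pos h2]
    rw [X_jump P ω hω n₀ lam X hX hs hk₀ h1 h2, pow_two, Finset.sum_mul_sum]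
    apply Finset.sum_congr rfl
    intro a _
    apply Finset.sum_congr rfl
    intro b _
    ring
  · intro k hk hne
    rw [Finset.mem_range] at hk
    by_cases hc1 : P.t n₀ k < s
    · rw [if_pos hc1]
      by_cases hc2 : s ≤ P.t n₀ (k+1)
      · exact absurd (P.blockIoc_unique hk hk₀ hc1 hc2 h1 h2) hne
      · rw [if_neg hc2]
    · rw [if_neg hc1]

end AuxJump

section AuxTsum

open Filter Topology Set

theorem tsum_Ioc_split (f : ℝ → ℝ) {u v : ℝ} (h0 : 0 ≤ u) (huv : u ≤ v)
    (hs : Summable (fun s : Ioc (0:ℝ) v => f s)) :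
    Summable (fun s : Ioc u v => f s) ∧
    (∑' s : Ioc u v, f s) = (∑' s : Ioc (0:ℝ) v, f s) - (∑' s : Ioc (0:ℝ) u, f s) := by
  have hind : Summable ((Ioc (0:ℝ) v).indicator f) :=
    summable_subtype_iff_indicator.mp hs
  have hsub1 : Ioc (0:ℝ) u ⊆ Ioc 0 v := Set.Ioc_subset_Ioc le_rfl huv
  have hsub2 : Ioc u v ⊆ Ioc (0:ℝ) v := Set.Ioc_subset_Ioc h0 le_rfl
  have h1 : Summable ((Ioc (0:ℝ) u).indicator f) := by
    have he : (Ioc (0:ℝ) u).indicator f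
        = (Ioc (0:ℝ) u).indicator ((Ioc (0:ℝ) v).indicator f) := by
      rw [Set.indicator_indicator, Set.inter_eq_left.mpr hsub1]
    rw [he]; exact hind.indicator _
  have h2 : Summable ((Ioc u v).indicator f) := by
    have he : (Ioc u v).indicator f
        = (Ioc u v).indicator ((Ioc (0:ℝ) v).indicator f) := by
      rw [Set.indicator_indicator, Set.inter_eq_left.mpr hsub2]
    rw [he]; exact hind.indicator _
  have hU : Ioc (0:ℝ) u ∪ Ioc u v = Ioc (0:ℝ) v := Set.Ioc_union_Ioc_eq_Ioc h0 huv
  have key : (∑' s : Ioc (0:ℝ) v, f s)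
      = (∑' s : Ioc (0:ℝ) u, f s) + (∑' s : Ioc u v, f s) := by
    rw [tsum_subtype, tsum_subtype, tsum_subtype, ← hU,
      Set.indicator_union_of_disjoint (Set.Ioc_disjoint_Ioc_of_le le_rfl) f]
    exact Summable.tsum_add h1 h2
  exact ⟨summable_subtype_iff_indicator.mpr h2, by linarith⟩

theorem tsum_Ioc_restrict (f : ℝ → ℝ) {t u v : ℝ} (hu0 : 0 ≤ u)
    (_hsum : Summable (fun s : Ioc (0:ℝ) t => f s)) :
    ∑' s : Ioc (0:ℝ) t, (if u < (s:ℝ) then (if (s:ℝ) ≤ v then f s else 0) else 0)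
      = ∑' s : Ioc u (max u (min t v)), f s := by
  have hpt : ∀ s : Ioc (0:ℝ) t,
      (if u < (s:ℝ) then (if (s:ℝ) ≤ v then f s else 0) else 0)
      = (Ioc u v).indicator f (s : ℝ) := by
    intro s
    rw [Set.indicator_apply]
    by_cases h : (s:ℝ) ∈ Ioc u v
    · rw [if_pos h, if_pos h.1, if_pos h.2]
    · rw [if_neg h]
      rw [mem_Ioc, not_and_or] at h
      rcases h with h | h
      · rw [if_neg h]
      · push_neg at h
        by_cases h' : u < (s:ℝ)
        · rw [if_pos h', if_neg (not_le.mpr h)]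
        · rw [if_neg h']
  rw [tsum_congr hpt, tsum_subtype, Set.indicator_indicator]
  have hset : Ioc (0:ℝ) t ∩ Ioc u v = Ioc u (max u (min t v)) := by
    rw [Set.Ioc_inter_Ioc, max_eq_right hu0]
    rcases le_total u (min t v) with h | h
    · rw [max_eq_right h]
    · rw [max_eq_left h, Set.Ioc_eq_empty (not_lt.mpr h), Set.Ioc_self]
  rw [hset, ← tsum_subtype]

end AuxTsum

section AuxJumpSum

open Filter Topology Set

variable {T : ℝ} {d : ℕ}

theorem jump_part (P : PartitionSeq T) (ω : PathD d) (hω : IsCadlagOn ω T)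
    (n₀ : ℕ) (lam : ℕ → (Fin d → ℝ)) (X : ℝ → ℝ)
    (hX : ∀ t : ℝ, X t = ∑ i ∈ Finset.range (P.m n₀),
        ∑ a : Fin d, lam i a * (ω (min (P.t n₀ (i + 1)) t) a - ω (min (P.t n₀ i) t) a))
    {t : ℝ} (ht : t ∈ Icc (0:ℝ) T)
    (hsum : ∀ a b : Fin d,
      Summable (fun s : Ioc (0:ℝ) t => pathJump ω s.1 a * pathJump ω s.1 b)) :
    Summable (fun s : Ioc (0:ℝ) t => (X s.1 - Function.leftLim X s.1)^2) ∧
    ∑' s : Ioc (0:ℝ) t, (X s.1 - Function.leftLim X s.1)^2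
      = ∑ k ∈ Finset.range (P.m n₀), ∑ a : Fin d, ∑ b : Fin d, lam k a * lam k b *
          ∑' s : Ioc (P.t n₀ k) (max (P.t n₀ k) (min t (P.t n₀ (k+1)))),
            pathJump ω (s:ℝ) a * pathJump ω (s:ℝ) b := by
  have hfn : ∀ s : Ioc (0:ℝ) t, (X s.1 - Function.leftLim X s.1)^2
      = ∑ k ∈ Finset.range (P.m n₀), ∑ a : Fin d, ∑ b : Fin d, lam k a * lam k b *
          (if P.t n₀ k < (s:ℝ) then (if (s:ℝ) ≤ P.t n₀ (k+1) then
            pathJump ω (s:ℝ) a * pathJump ω (s:ℝ) b else 0) else 0) := by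
    intro s
    exact X_jump_sq P ω hω n₀ lam X hX ⟨s.2.1, s.2.2.trans ht.2⟩
  have hterm : ∀ (k : ℕ) (a b : Fin d),
      Summable (fun s : Ioc (0:ℝ) t => lam k a * lam k b *
        (if P.t n₀ k < (s:ℝ) then (if (s:ℝ) ≤ P.t n₀ (k+1) then
          pathJump ω (s:ℝ) a * pathJump ω (s:ℝ) b else 0) else 0)) := by
    intro k a b
    apply Summable.of_norm_bounded
      (g := fun s : Ioc (0:ℝ) t => |lam k a * lam k b| *
        |pathJump ω (s:ℝ) a * pathJump ω (s:ℝ) b|)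
      (((hsum a b).abs).mul_left _)
    intro s
    rw [Real.norm_eq_abs, abs_mul]
    apply mul_le_mul_of_nonneg_left _ (abs_nonneg _)
    split_ifs
    · exact le_rfl
    · simp [abs_mul_abs_self, mul_nonneg, abs_nonneg]
    · simp [abs_mul_abs_self, mul_nonneg, abs_nonneg]
  constructor
  · apply (summable_congr hfn).mpr
    apply summable_sum
    intro k _
    apply summable_sum
    intro a _
    apply summable_sum
    intro b _
    exact hterm k a b
  · rw [tsum_congr hfn]
    rw [Summable.tsum_finsetSum (fun k _ => summable_sum (fun a _ => summable_sum (fun b _ => hterm k a b)))]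
    apply Finset.sum_congr rfl
    intro k hk
    rw [Finset.mem_range] at hk
    rw [Summable.tsum_finsetSum (fun a _ => summable_sum (fun b _ => hterm k a b))]
    apply Finset.sum_congr rfl
    intro a _
    rw [Summable.tsum_finsetSum (fun b _ => hterm k a b)]
    apply Finset.sum_congr rfl
    intro b _
    rw [tsum_mul_left]
    congr 1
    exact tsum_Ioc_restrict (fun s => pathJump ω s a * pathJump ω s b)
      (P.t_nonneg hk.le) (hsum a b)

end AuxJumpSum

open Filter Topology Set MeasureTheory in
/-- **Pathwise isometry for simple integrands.**  Let `Π` be nested and dense, `ω` a càdlàg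
positive path with finite quadratic variation `Q` along `Π` (with continuous part `Qc`),
and `φ = Σ_i λ_i 1_{(t^{n₀}_i, t^{n₀}_{i+1}]}` a simple predictable process.  Then the
pathwise integral `X(t) = Σ_i λ_i · (ω(t^{n₀}_{i+1} ∧ t) - ω(t^{n₀}_i ∧ t))` has finite
quadratic variation along `Π` and `[X](T) = Σ_i tr(λ_i λ_iᵀ ([ω](t^{n₀}_{i+1}) - [ω](t^{n₀}_i)))`. -/
theorem pathwise_isometry_simple
    (T : ℝ) (hT : 0 < T) (d : ℕ) (P : PartitionSeq T)
    (hnested : ∀ n : ℕ, ∀ i ≤ P.m n, ∃ j ≤ P.m (n + 1), P.t (n + 1) j = P.t n i)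
    (ω : PathD d) (hω : IsCadlagOn ω T)
    (hω_pos : ∀ u ∈ Icc (0:ℝ) T, ∀ a : Fin d, 0 ≤ ω u a)
    -- finite quadratic variation of `ω` along `P`, with continuous part `Qc`
    (Q Qc : ℝ → Matrix (Fin d) (Fin d) ℝ)
    (hQ : ∀ t ∈ Icc (0:ℝ) T, ∀ a b : Fin d,
      Tendsto (fun n => ∑ i ∈ Finset.range (P.m n),
        if P.t n i ≤ t then
          (ω (P.t n (i + 1)) a - ω (P.t n i) a) * (ω (P.t n (i + 1)) b - ω (P.t n i) b)
        else 0) atTop (nhds (Q t a b)))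
    (hQc_cont : ∀ a b : Fin d, ContinuousOn (fun t => Qc t a b) (Icc 0 T))
    (hjump_summable : ∀ t ∈ Icc (0:ℝ) T, ∀ a b : Fin d,
      Summable (fun s : Ioc (0:ℝ) t => pathJump ω s.1 a * pathJump ω s.1 b))
    (hdecomp : ∀ t ∈ Icc (0:ℝ) T, ∀ a b : Fin d,
      Q t a b = Qc t a b + ∑' s : Ioc (0:ℝ) t, pathJump ω s.1 a * pathJump ω s.1 b)
    -- the simple predictable integrand
    (n₀ : ℕ) (lam : ℕ → (Fin d → ℝ)) :
    -- `X` is the pathwise integral of `φ` against `ω`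
    ∀ X : ℝ → ℝ,
      (∀ t : ℝ, X t = ∑ i ∈ Finset.range (P.m n₀),
        ∑ a : Fin d, lam i a * (ω (min (P.t n₀ (i + 1)) t) a - ω (min (P.t n₀ i) t) a)) →
      ∃ QX : ℝ → ℝ,
        -- `X` has finite quadratic variation along `P` ...
        (∀ t ∈ Icc (0:ℝ) T,
          Tendsto (fun n => ∑ i ∈ Finset.range (P.m n),
            if P.t n i ≤ t then (X (P.t n (i + 1)) - X (P.t n i))^2 else 0)
            atTop (nhds (QX t))) ∧
        (∃ QXc : ℝ → ℝ, ContinuousOn QXc (Icc 0 T) ∧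
          ∀ t ∈ Icc (0:ℝ) T,
            Summable (fun s : Ioc (0:ℝ) t => (X s.1 - Function.leftLim X s.1)^2) ∧
            QX t = QXc t + ∑' s : Ioc (0:ℝ) t, (X s.1 - Function.leftLim X s.1)^2) ∧
        -- ... and the isometry identity holds
        QX T = ∑ i ∈ Finset.range (P.m n₀),
          ∑ a : Fin d, ∑ b : Fin d,
            lam i a * lam i b * (Q (P.t n₀ (i + 1)) a b - Q (P.t n₀ i) a b) := by
  intro X hXdef
  have hemb : ∀ n ≥ n₀, ∀ k ≤ P.m n₀, ∃ j ≤ P.m n, P.t n j = P.t n₀ k :=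
    fun n hn => P.embed hnested hn
  refine ⟨fun t => ∑ k ∈ Finset.range (P.m n₀), ∑ a : Fin d, ∑ b : Fin d,
      lam k a * lam k b *
        (Q (max (P.t n₀ k) (min t (P.t n₀ (k+1)))) a b - Q (P.t n₀ k) a b),
    ?_, ⟨fun t => ∑ k ∈ Finset.range (P.m n₀), ∑ a : Fin d, ∑ b : Fin d,
      lam k a * lam k b *
        (Qc (max (P.t n₀ k) (min t (P.t n₀ (k+1)))) a b - Qc (P.t n₀ k) a b), ?_, ?_⟩, ?_⟩
  · -- convergence of the quadratic sums of X
    intro t ht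
    have htend : Tendsto (fun n => ∑ k ∈ Finset.range (P.m n₀), ∑ a : Fin d, ∑ b : Fin d,
        lam k a * lam k b * (∑ i ∈ Finset.range (P.m n),
          if P.t n₀ k ≤ P.t n i then (if P.t n i < P.t n₀ (k+1) then (if P.t n i ≤ t then
          (ω (P.t n (i + 1)) a - ω (P.t n i) a) * (ω (P.t n (i + 1)) b - ω (P.t n i) b)
          else 0) else 0) else 0)) atTop
        (nhds (∑ k ∈ Finset.range (P.m n₀), ∑ a : Fin d, ∑ b : Fin d,
          lam k a * lam k b *
            (Q (max (P.t n₀ k) (min t (P.t n₀ (k+1)))) a b - Q (P.t n₀ k) a b))) := by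
      apply tendsto_finset_sum
      intro k hk
      apply tendsto_finset_sum
      intro a _
      apply tendsto_finset_sum
      intro b _
      exact (block_tendsto P ω hω Q hQ hemb ht (Finset.mem_range.mp hk) a b).const_mul _
    apply htend.congr'
    filter_upwards [eventually_ge_atTop n₀] with n hn
    exact (qsum_decomp P ω lam X hXdef (hemb n hn) t).symm
  · -- continuity of the continuous part
    apply continuousOn_finset_sum
    intro k hk
    rw [Finset.mem_range] at hk
    apply continuousOn_finset_sum
    intro a _
    apply continuousOn_finset_sum
    intro b _
    apply ContinuousOn.mul continuousOn_const
    apply ContinuousOn.sub _ continuousOn_const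
    have hclamp : Continuous fun t : ℝ => max (P.t n₀ k) (min t (P.t n₀ (k+1))) :=
      Continuous.max continuous_const (Continuous.min continuous_id continuous_const)
    apply (hQc_cont a b).comp hclamp.continuousOn
    intro x hx
    constructor
    · exact (P.t_nonneg hk.le).trans (le_max_left _ _)
    · exact max_le (P.t_le_T hk.le) ((min_le_right _ _).trans (P.t_le_T hk))
  · -- summability of the jumps and decomposition
    intro t ht
    have hjp := jump_part P ω hω n₀ lam X hXdef ht (fun a b => hjump_summable t ht a b)
    refine ⟨hjp.1, ?_⟩
    rw [hjp.2, ← Finset.sum_add_distrib]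
    apply Finset.sum_congr rfl
    intro k hk
    rw [Finset.mem_range] at hk
    rw [← Finset.sum_add_distrib]
    apply Finset.sum_congr rfl
    intro a _
    rw [← Finset.sum_add_distrib]
    apply Finset.sum_congr rfl
    intro b _
    have hu : P.t n₀ k ∈ Icc (0:ℝ) T := P.t_mem hk.le
    have hcmem : max (P.t n₀ k) (min t (P.t n₀ (k+1))) ∈ Icc (0:ℝ) T :=
      ⟨hu.1.trans (le_max_left _ _),
        max_le (P.t_le_T hk.le) ((min_le_right _ _).trans (P.t_le_T hk))⟩
    have hsplit := tsum_Ioc_split (fun s => pathJump ω s a * pathJump ω s b) hu.1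
      (le_max_left _ _) (hjump_summable _ hcmem a b)
    rw [hdecomp _ hcmem a b, hdecomp _ hu a b, hsplit.2]
    ring
  · -- the isometry identity at time T
    apply Finset.sum_congr rfl
    intro k hk
    rw [Finset.mem_range] at hk
    have h1 : min T (P.t n₀ (k+1)) = P.t n₀ (k+1) := min_eq_right (P.t_le_T hk)
    have h2 : max (P.t n₀ k) (P.t n₀ (k+1)) = P.t n₀ (k+1) :=
      max_eq_right (P.mono n₀ k hk).le
    rw [h1, h2]
end

section
/- Let ψ : ℝ → ℂ be continuously differentiable and let t < T, x, x̄ ∈ ℝ. Define Ĝ⁰(t,x;s,ξ) := exp( i ξ x + (s−t) ψ(ξ) ) for s ∈ [t,T]. Then for every ξ ∈ ℝ, ∫_t^T e^{(T−s)ψ(ξ)} [ ( i ∂_ξ + x̄ ) ( (ξ² + iξ) Ĝ⁰(t,x;s,ξ) ) − (2iξ − 1) Ĝ⁰(t,x;s,ξ) ] ds = − Ĝ⁰(t,x;T,ξ) (T−t) (ξ² + iξ) ( x − x̄ − (i/2)(T−t) ψ′(ξ) ). Consequently, for any constant α₁ ∈ ℝ, the solution Ĝ¹(t,x;·,ξ)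 of the ordinary differential equation ∂_T u(T,ξ) = ψ(ξ) u(T,ξ) + α₁ [ (i∂_ξ + x̄)( (ξ²+iξ) Ĝ⁰(t,x;T,ξ) ) − (2iξ−1) Ĝ⁰(t,x;T,ξ) ] with u(t,ξ) = 0 is given by Ĝ¹(t,x;T,ξ) = − Ĝ⁰(t,x;T,ξ) α₁ (T−t) (ξ² + iξ) ( x − x̄ − (i/2)(T−t) ψ′(ξ) ). -/
open Filter Topology Set MeasureTheory intervalIntegral Complex

noncomputable section

/-- The zeroth-order approximation of the characteristic function:
`Ĝ⁰(t,x;s,ξ) = exp(iξx + (s-t)ψ(ξ))`. -/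
def hatG0 (ψ : ℝ → ℂ) (t x s : ℝ) (ξ : ℝ) : ℂ :=
  Complex.exp (Complex.I * (ξ : ℂ) * (x : ℂ) + ((s - t : ℝ) : ℂ) * ψ ξ)

/-- The Fourier-space source term
`(i∂_ξ + x̄)((ξ² + iξ)Ĝ⁰(t,x;s,ξ)) - (2iξ - 1)Ĝ⁰(t,x;s,ξ)`. -/
def fourierSrc (ψ : ℝ → ℂ) (t x xbar s : ℝ) (ξ : ℝ) : ℂ :=
  (Complex.I * deriv (fun ξ' : ℝ => ((ξ' : ℂ)^2 + Complex.I * (ξ' : ℂ)) * hatG0 ψ t x s ξ') ξ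
      + (xbar : ℂ) * (((ξ : ℂ)^2 + Complex.I * (ξ : ℂ)) * hatG0 ψ t x s ξ))
    - (2 * Complex.I * (ξ : ℂ) - 1) * hatG0 ψ t x s ξ

lemma hatG0_hasDerivAt (ψ : ℝ → ℂ) (hψ : ContDiff ℝ 1 ψ) (t x s ξ : ℝ) :
    HasDerivAt (fun ξ' : ℝ => hatG0 ψ t x s ξ')
      ((Complex.I * x + ((s - t : ℝ) : ℂ) * deriv ψ ξ) * hatG0 ψ t x s ξ) ξ := by
  have h1 : HasDerivAt (fun ξ' : ℝ => (ξ' : ℂ)) 1 ξ := (hasDerivAt_id ξ).ofReal_comp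
  have hψd : HasDerivAt ψ (deriv ψ ξ) ξ :=
    ((hψ.differentiable one_ne_zero) ξ).hasDerivAt
  have hin : HasDerivAt (fun ξ' : ℝ => Complex.I * (ξ' : ℂ) * (x : ℂ) + ((s - t : ℝ) : ℂ) * ψ ξ')
      (Complex.I * x + ((s - t : ℝ) : ℂ) * deriv ψ ξ) ξ := by
    have : HasDerivAt (fun ξ' : ℝ => Complex.I * (ξ' : ℂ) * (x : ℂ) + ((s - t : ℝ) : ℂ) * ψ ξ') _ ξ :=
      ((h1.const_mul Complex.I).mul_const (x : ℂ)).add (hψd.const_mul ((s - t : ℝ) : ℂ))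
    simpa using this
  simpa [hatG0, mul_comm] using hin.cexp

lemma fourierSrc_eq (ψ : ℝ → ℂ) (hψ : ContDiff ℝ 1 ψ) (t x xbar s ξ : ℝ) :
    fourierSrc ψ t x xbar s ξ
    = hatG0 ψ t x s ξ * (((ξ : ℂ)^2 + Complex.I * (ξ : ℂ)) *
        ((xbar : ℂ) - x + Complex.I * ((s - t : ℝ) : ℂ) * deriv ψ ξ)) := by
  have h1 : HasDerivAt (fun ξ' : ℝ => (ξ' : ℂ)) 1 ξ := (hasDerivAt_id ξ).ofReal_comp
  have hpoly : HasDerivAt (fun ξ' : ℝ => ((ξ' : ℂ)^2 + Complex.I * (ξ' : ℂ)))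
      (2 * (ξ : ℂ) + Complex.I) ξ := by
    have : HasDerivAt (fun ξ' : ℝ => (ξ' : ℂ) * ξ' + Complex.I * ξ') _ ξ :=
      ((h1.mul h1).add (h1.const_mul Complex.I))
    have h2 : (1:ℂ) * ξ + ξ * 1 + Complex.I * 1 = 2*ξ + Complex.I := by ring
    rw [h2] at this
    simpa [pow_two] using this
  have hG := hatG0_hasDerivAt ψ hψ t x s ξ
  have hprod : HasDerivAt (fun ξ' : ℝ => ((ξ' : ℂ)^2 + Complex.I * (ξ' : ℂ)) * hatG0 ψ t x s ξ') _ ξ :=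
    hpoly.mul hG
  unfold fourierSrc
  rw [hprod.deriv]
  have hI : (Complex.I : ℂ) * Complex.I = -1 := Complex.I_mul_I
  linear_combination (hatG0 ψ t x s ξ * (1 + Complex.I * ξ * x + (ξ:ℂ)^2 * x)) * hI

lemma exp_mul_hatG0 (ψ : ℝ → ℂ) (t x : ℝ) (ξ : ℝ) (s T : ℝ) :
    Complex.exp (((T - s : ℝ) : ℂ) * ψ ξ) * hatG0 ψ t x s ξ = hatG0 ψ t x T ξ := by
  unfold hatG0
  rw [← Complex.exp_add]
  congr 1
  push_cast
  ring

/-- **First-order term of the adjoint expansion of the characteristic function in Fourier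
space**: the explicit value of the Duhamel integral, and consequently the solution of the
associated ordinary differential equation with zero initial condition. -/
theorem fourier_first_order_term
    (T t x xbar : ℝ) (htT : t < T)
    (ψ : ℝ → ℂ) (hψ : ContDiff ℝ 1 ψ) :
    ∀ ξ : ℝ,
      -- the integral identity
      ((∫ s in t..T, Complex.exp (((T - s : ℝ) : ℂ) * ψ ξ) * fourierSrc ψ t x xbar s ξ)
        = -hatG0 ψ t x T ξ * ((T - t : ℝ) : ℂ) * ((ξ : ℂ)^2 + Complex.I * (ξ : ℂ)) *
            ((x : ℂ) - (xbar : ℂ) - (Complex.I / 2) * ((T - t : ℝ) : ℂ) * deriv ψ ξ)) ∧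
      -- consequently, the solution of the ODE
      -- `∂_T u = ψ(ξ) u + α₁ [(i∂_ξ + x̄)((ξ²+iξ)Ĝ⁰) - (2iξ-1)Ĝ⁰]`, `u(t) = 0`, is given by
      -- `Ĝ¹(t,x;T,ξ) = -Ĝ⁰(t,x;T,ξ) α₁ (T-t)(ξ²+iξ)(x - x̄ - (i/2)(T-t)ψ'(ξ))`
      (∀ α₁ : ℝ, ∀ u : ℝ → ℂ, u t = 0 →
        (∀ s ∈ Icc t T, HasDerivAt u (ψ ξ * u s + (α₁ : ℂ) * fourierSrc ψ t x xbar s ξ) s) →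
        u T = -hatG0 ψ t x T ξ * (α₁ : ℂ) * ((T - t : ℝ) : ℂ) *
            ((ξ : ℂ)^2 + Complex.I * (ξ : ℂ)) *
            ((x : ℂ) - (xbar : ℂ) - (Complex.I / 2) * ((T - t : ℝ) : ℂ) * deriv ψ ξ)) := by
  intro ξ
  set P : ℂ := (ξ : ℂ)^2 + Complex.I * (ξ : ℂ) with hP
  set c1 : ℂ := hatG0 ψ t x T ξ * (P * ((xbar : ℂ) - x)) with hc1
  set c2 : ℂ := hatG0 ψ t x T ξ * (P * (Complex.I * deriv ψ ξ)) with hc2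
  have hint_eq : ∀ s : ℝ,
      Complex.exp (((T - s : ℝ) : ℂ) * ψ ξ) * fourierSrc ψ t x xbar s ξ
        = c1 + ((s - t : ℝ) : ℂ) * c2 := by
    intro s
    rw [fourierSrc_eq ψ hψ t x xbar s ξ, ← mul_assoc, exp_mul_hatG0]
    simp only [hc1, hc2, hP]
    ring
  have h1 : (∫ s in t..T, Complex.exp (((T - s : ℝ) : ℂ) * ψ ξ) * fourierSrc ψ t x xbar s ξ)
      = -hatG0 ψ t x T ξ * ((T - t : ℝ) : ℂ) * P *
          ((x : ℂ) - (xbar : ℂ) - (Complex.I / 2) * ((T - t : ℝ) : ℂ) * deriv ψ ξ) := by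
    have : (∫ s in t..T, Complex.exp (((T - s : ℝ) : ℂ) * ψ ξ) * fourierSrc ψ t x xbar s ξ)
        = ∫ s in t..T, (c1 + ((s - t : ℝ) : ℂ) * c2) := by
      exact intervalIntegral.integral_congr fun s _ => hint_eq s
    rw [this]
    have hic : IntervalIntegrable (fun _ : ℝ => c1) MeasureTheory.volume t T :=
      intervalIntegrable_const
    have hcont : Continuous (fun s : ℝ => ((s - t : ℝ) : ℂ) * c2) := by
      exact (Complex.continuous_ofReal.comp (continuous_id.sub continuous_const)).mul
        continuous_const
    rw [intervalIntegral.integral_add hic (hcont.intervalIntegrable t T)]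
    rw [intervalIntegral.integral_const, intervalIntegral.integral_mul_const]
    have : (∫ s in t..T, ((s - t : ℝ) : ℂ)) = (((T - t)^2 / 2 : ℝ) : ℂ) := by
      rw [intervalIntegral.integral_ofReal]
      norm_cast
      have : (∫ s in t..T, (s - t : ℝ)) = (∫ s in t..T, s) - ∫ _ in t..T, t := by
        rw [← intervalIntegral.integral_sub intervalIntegrable_id intervalIntegrable_const]
      rw [this, integral_id, intervalIntegral.integral_const]
      simp [smul_eq_mul]
      ring
    rw [this]
    simp only [Complex.real_smul, smul_eq_mul, hc1, hc2, hP]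
    push_cast
    ring
  refine ⟨h1, ?_⟩
  intro α₁ u hu0 hu
  set E : ℝ → ℂ := fun s => Complex.exp (-(((s - t : ℝ) : ℂ)) * ψ ξ) with hE
  have hEd : ∀ s : ℝ, HasDerivAt E (-ψ ξ * E s) s := by
    intro s
    have h0 : HasDerivAt (fun s' : ℝ => ((s' - t : ℝ) : ℂ)) 1 s :=
      ((hasDerivAt_id s).sub_const t).ofReal_comp
    have hin : HasDerivAt (fun s' : ℝ => -(((s' - t : ℝ) : ℂ)) * ψ ξ) (-ψ ξ) s := by
      simpa using (h0.neg).mul_const (ψ ξ)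
    simpa [hE, mul_comm] using hin.cexp
  have hw : ∀ s ∈ Set.uIcc t T, HasDerivAt (fun s' => E s' * u s')
      (E s * ((α₁ : ℂ) * fourierSrc ψ t x xbar s ξ)) s := by
    intro s hs
    rw [Set.uIcc_of_le htT.le] at hs
    have : HasDerivAt (fun s' => E s' * u s') _ s := (hEd s).mul (hu s hs)
    convert this using 1
    ring
  have hcontd : Continuous (fun s : ℝ => E s * ((α₁ : ℂ) * fourierSrc ψ t x xbar s ξ)) := by
    have : (fun s : ℝ => E s * ((α₁ : ℂ) * fourierSrc ψ t x xbar s ξ))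
        = fun s : ℝ => E s * ((α₁ : ℂ) * (hatG0 ψ t x s ξ * (P *
            ((xbar : ℂ) - x + Complex.I * ((s - t : ℝ) : ℂ) * deriv ψ ξ)))) := by
      funext s; rw [fourierSrc_eq ψ hψ t x xbar s ξ]
    rw [this]
    unfold hatG0
    fun_prop
  have hftc := intervalIntegral.integral_eq_sub_of_hasDerivAt hw
    (hcontd.intervalIntegrable t T)
  have hwt : E t * u t = 0 := by rw [hu0, mul_zero]
  have hET : Complex.exp (((T - t : ℝ) : ℂ) * ψ ξ) * E T = 1 := by
    rw [hE]
    rw [← Complex.exp_add,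
      show (((T - t : ℝ) : ℂ) * ψ ξ + -(((T - t : ℝ) : ℂ)) * ψ ξ) = 0 by ring,
      Complex.exp_zero]
  have huT : u T = Complex.exp (((T - t : ℝ) : ℂ) * ψ ξ) *
      ∫ s in t..T, E s * ((α₁ : ℂ) * fourierSrc ψ t x xbar s ξ) := by
    rw [hftc, hwt, sub_zero, ← mul_assoc, hET, one_mul]
  rw [huT, ← intervalIntegral.integral_const_mul]
  have : (fun s => Complex.exp (((T - t : ℝ) : ℂ) * ψ ξ) *
        (E s * ((α₁ : ℂ) * fourierSrc ψ t x xbar s ξ)))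
      = fun s => (α₁ : ℂ) * (Complex.exp (((T - s : ℝ) : ℂ) * ψ ξ) *
          fourierSrc ψ t x xbar s ξ) := by
    funext s
    have hEE : Complex.exp (((T - t : ℝ) : ℂ) * ψ ξ) * E s
        = Complex.exp (((T - s : ℝ) : ℂ) * ψ ξ) := by
      rw [hE, ← Complex.exp_add]
      congr 1
      push_cast
      ring
    calc Complex.exp (((T - t : ℝ) : ℂ) * ψ ξ) *
          (E s * ((α₁ : ℂ) * fourierSrc ψ t x xbar s ξ))
        = (Complex.exp (((T - t : ℝ) : ℂ) * ψ ξ) * E s) *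
            ((α₁ : ℂ) * fourierSrc ψ t x xbar s ξ) := by ring
      _ = (α₁ : ℂ) * (Complex.exp (((T - s : ℝ) : ℂ) * ψ ξ) * fourierSrc ψ t x xbar s ξ) := by
          rw [hEE]; ring
  rw [this, intervalIntegral.integral_const_mul, h1]
  ring

end
end

section
/- Let Π be a dense nested sequence of partitions of [0,T] that exhausts the càdlàg path ω : [0,T] → ℝ, i.e. every jump time of ω belongs to ⋃_{n≥1} π^n. Suppose the functions A^n(t) := Σ_{i=0}^{m(n)−1} ( ω(t^n_{i+1} ∧ t) − ω(t^n_i ∧ t) )², t ∈ [0,T], converge uniformly on [0,T] to a function A as n → ∞ (Vovk's quadratic variation along Π). Then for every t ∈ [0,T] the sums Σ_{i : t^n_i ≤ t} ( ω(t^n_{i+1}) − ω(t^n_i) )² also converge to A(t) as n → ∞; in particular the two difference terms satisfy ( ω(t) − ω(t^n_{k̄(n,t)}) )² − ( ω(t^n_{k̄(n,t)+1}) − ω(t^n_{k̄(n,t)}) )² → 0, where k̄(n,t) := max{ i : t^n_i ≤ t }. -/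
open Filter Topology Set

noncomputable section

open Classical in
/-- `k̄(n,t) = max { i ∈ {0,…,m(n)-1} : tⁿ_i ≤ t }`. -/
def kbar (T : ℝ) (P : PartitionSeq T) (n : ℕ) (s : ℝ) : ℕ :=
  Nat.findGreatest (fun i => P.t n i ≤ s) (P.m n - 1)

/- ### Auxiliary lemmas -/

private lemma PS.mono_le (T : ℝ) (P : PartitionSeq T) (n : ℕ) :
    ∀ {i j : ℕ}, i ≤ j → j ≤ P.m n → P.t n i ≤ P.t n j := by
  intro i j hij hj
  induction j with
  | zero =>
    have : i = 0 := Nat.le_zero.mp hij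
    subst this; exact le_rfl
  | succ j ih =>
    rcases Nat.lt_or_ge i (j + 1) with h | h
    · have hij' : i ≤ j := Nat.lt_succ_iff.mp h
      exact (ih hij' (le_trans (Nat.le_succ j) hj)).trans
        (le_of_lt (P.mono n j (by omega)))
    · have : i = j + 1 := le_antisymm hij h
      subst this; exact le_rfl

private lemma PS.nonneg (T : ℝ) (P : PartitionSeq T) (n : ℕ) {i : ℕ} (hi : i ≤ P.m n) :
    0 ≤ P.t n i := by
  have := PS.mono_le T P n (Nat.zero_le i) hi
  rwa [P.first] at this

private lemma PS.le_T (T : ℝ) (P : PartitionSeq T) (n : ℕ) {i : ℕ} (hi : i ≤ P.m n) :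
    P.t n i ≤ T := by
  have := PS.mono_le T P n hi le_rfl
  rwa [P.last] at this

open Classical in
private lemma kbar_lt (T : ℝ) (P : PartitionSeq T) (n : ℕ) (s : ℝ) :
    kbar T P n s < P.m n :=
  lt_of_le_of_lt (Nat.findGreatest_le _) (Nat.sub_lt (P.m_pos n) one_pos)

open Classical in
private lemma kbar_le_self (T : ℝ) (P : PartitionSeq T) (n : ℕ) {s : ℝ} (hs : 0 ≤ s) :
    P.t n (kbar T P n s) ≤ s :=
  Nat.findGreatest_spec (P := fun i => P.t n i ≤ s) (Nat.zero_le _)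
    (by show P.t n 0 ≤ s; rw [P.first]; exact hs)

open Classical in
private lemma kbar_greatest (T : ℝ) (P : PartitionSeq T) (n : ℕ) {s : ℝ} {i : ℕ}
    (h1 : kbar T P n s < i) (h2 : i < P.m n) : s < P.t n i := by
  have := Nat.findGreatest_is_greatest (P := fun i => P.t n i ≤ s) h1 (by omega)
  exact lt_of_not_ge this

open Classical in
private lemma kbar_T (T : ℝ) (P : PartitionSeq T) (n : ℕ) :
    kbar T P n T = P.m n - 1 :=
  le_antisymm (Nat.findGreatest_le _)
    (Nat.le_findGreatest le_rfl (PS.le_T T P n (by omega)))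

open Classical in
private lemma kbar_ge_of_mem (T : ℝ) (P : PartitionSeq T) (n : ℕ) {s : ℝ} {j : ℕ}
    (hj : P.t n j = s) (hjlt : j < P.m n) : j ≤ kbar T P n s :=
  Nat.le_findGreatest (by omega) (le_of_eq hj)

private lemma kbar_succ_ge (T : ℝ) (P : PartitionSeq T) (n : ℕ) {s : ℝ}
    (hs0 : 0 ≤ s) (hsT : s ≤ T) : s ≤ P.t n (kbar T P n s + 1) := by
  rcases lt_or_eq_of_le hsT with h | h
  · rcases Nat.lt_or_ge (kbar T P n s + 1) (P.m n) with hlt | hge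
    · exact (kbar_greatest T P n (Nat.lt_succ_self _) hlt).le
    · have hk : kbar T P n s + 1 = P.m n :=
        le_antisymm (kbar_lt T P n s) hge
      rw [hk, P.last]; exact hsT
  · rw [h, kbar_T T P n]
    have hm : P.m n - 1 + 1 = P.m n := Nat.succ_pred_eq_of_pos (P.m_pos n)
    rw [hm, P.last]

/-- **From Vovk's quadratic variation to the pointwise quadratic variation.**
If `Π` is dense and nested and exhausts the jump times of the càdlàg path `ω`, and the
truncated quadratic sums `Aⁿ` converge uniformly on `[0,T]` to `A`, then for every `t` the
sums `Σ_{tⁿ_i ≤ t} (ω(tⁿ_{i+1}) - ω(tⁿ_i))²` also converge to `A(t)`, and the two difference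
terms tend to `0`. -/
theorem vovk_qv_implies_pointwise_qv
    (T : ℝ) (hT : 0 < T) (P : PartitionSeq T)
    (hnested : ∀ n : ℕ, ∀ i ≤ P.m n, ∃ j ≤ P.m (n + 1), P.t (n + 1) j = P.t n i)
    (ω : ℝ → ℝ) (hω : IsCadlagOn ω T)
    -- `Π` exhausts `ω`: every jump time of `ω` belongs to `⋃ₙ πⁿ`
    (hexhaust : ∀ s ∈ Ioc (0:ℝ) T, ω s ≠ Function.leftLim ω s →
      ∃ n : ℕ, ∃ i ≤ P.m n, P.t n i = s)
    -- Vovk's quadratic variation: uniform convergence of the truncated quadratic sums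
    (A : ℝ → ℝ)
    (hunif : TendstoUniformlyOn
      (fun n t => ∑ i ∈ Finset.range (P.m n),
        (ω (min (P.t n (i + 1)) t) - ω (min (P.t n i) t))^2)
      A atTop (Icc 0 T)) :
    ∀ t ∈ Icc (0:ℝ) T,
      Tendsto (fun n => ∑ i ∈ Finset.range (P.m n),
        if P.t n i ≤ t then (ω (P.t n (i + 1)) - ω (P.t n i))^2 else 0) atTop
        (nhds (A t)) ∧
      Tendsto (fun n =>
        (ω t - ω (P.t n (kbar T P n t)))^2
          - (ω (P.t n (kbar T P n t + 1)) - ω (P.t n (kbar T P n t)))^2) atTop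
        (nhds 0) := by
  intro t ht
  obtain ⟨ht0, htT⟩ := ht
  set M : ℕ → ℝ := fun n => ⨆ i : Fin (P.m n), (P.t n (i + 1) - P.t n i) with hMdef
  have hM : Tendsto M atTop (𝓝 0) := P.mesh
  have hklt : ∀ n, kbar T P n t < P.m n := fun n => kbar_lt T P n t
  have hk1 : ∀ n, P.t n (kbar T P n t) ≤ t := fun n => kbar_le_self T P n ht0
  have hk2 : ∀ n, t ≤ P.t n (kbar T P n t + 1) := fun n => kbar_succ_ge T P n ht0 htT
  have hdiff : ∀ n, P.t n (kbar T P n t + 1) - P.t n (kbar T P n t) ≤ M n := by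
    intro n
    exact le_ciSup (f := fun i : Fin (P.m n) => P.t n (↑i + 1) - P.t n ↑i)
      (Set.Finite.bddAbove (Set.finite_range _)) (⟨kbar T P n t, hklt n⟩ : Fin (P.m n))
  have hlow : Tendsto (fun n => P.t n (kbar T P n t)) atTop (𝓝 t) := by
    apply tendsto_of_tendsto_of_tendsto_of_le_of_le
      (g := fun n => t - M n) (h := fun _ => t)
    · simpa using tendsto_const_nhds.sub hM
    · exact tendsto_const_nhds
    · intro n
      show t - M n ≤ P.t n (kbar T P n t)
      have h1 := hdiff n; have h2 := hk2 n; linarith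
    · exact hk1
  have hupp : Tendsto (fun n => P.t n (kbar T P n t + 1)) atTop (𝓝 t) := by
    apply tendsto_of_tendsto_of_tendsto_of_le_of_le
      (g := fun _ => t) (h := fun n => t + M n)
    · exact tendsto_const_nhds
    · simpa using tendsto_const_nhds.add hM
    · exact hk2
    · intro n
      show P.t n (kbar T P n t + 1) ≤ t + M n
      have h1 := hdiff n; have h2 := hk1 n; linarith
  -- the difference term tends to 0
  have hD : Tendsto (fun n =>
      (ω t - ω (P.t n (kbar T P n t)))^2
        - (ω (P.t n (kbar T P n t + 1)) - ω (P.t n (kbar T P n t)))^2) atTop (𝓝 0) := by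
    rcases eq_or_lt_of_le htT with hTeq | htT'
    · -- t = T : the difference term vanishes identically
      have hsucc : ∀ n, P.t n (kbar T P n t + 1) = t := by
        intro n
        rw [hTeq, kbar_T T P n]
        have hm : P.m n - 1 + 1 = P.m n := Nat.succ_pred_eq_of_pos (P.m_pos n)
        rw [hm, P.last]
      have : (fun n =>
          (ω t - ω (P.t n (kbar T P n t)))^2
            - (ω (P.t n (kbar T P n t + 1)) - ω (P.t n (kbar T P n t)))^2)
          = fun _ => (0:ℝ) := by
        funext n; rw [hsucc n]; ring
      rw [this]; exact tendsto_const_nhds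
    · -- t < T : right-continuity gives the limit of the upper endpoint
      have hωup : Tendsto (fun n => ω (P.t n (kbar T P n t + 1))) atTop (𝓝 (ω t)) := by
        have hcont := hω.1 t ⟨ht0, htT'⟩
        exact hcont.tendsto.comp
          (tendsto_nhdsWithin_of_tendsto_nhds_of_eventually_within _ hupp
            (Eventually.of_forall fun n => hk2 n))
      -- helper: if eventually `tⁿ_{k̄} = t`, we are done
      have key : (∀ᶠ n in atTop, P.t n (kbar T P n t) = t) →
          Tendsto (fun n =>
            (ω t - ω (P.t n (kbar T P n t)))^2
              - (ω (P.t n (kbar T P n t + 1)) - ω (P.t n (kbar T P n t)))^2)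
            atTop (𝓝 0) := by
        intro hev
        have h1 : Tendsto (fun n => (0:ℝ) - (ω (P.t n (kbar T P n t + 1)) - ω t)^2)
            atTop (𝓝 0) := by
          have h2 := (hωup.sub (tendsto_const_nhds (x := ω t))).pow 2
          have h3 := (tendsto_const_nhds (x := (0:ℝ))).sub h2
          simpa using h3
        refine h1.congr' ?_
        filter_upwards [hev] with n hn
        rw [hn]; ring
      rcases eq_or_lt_of_le ht0 with h0 | h0pos
      · -- t = 0 : the lower endpoint is exactly t
        apply key
        refine Eventually.of_forall fun n => ?_
        have hge : 0 ≤ P.t n (kbar T P n t) := PS.nonneg T P n (le_of_lt (hklt n))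
        exact le_antisymm (hk1 n) (h0 ▸ hge)
      · by_cases hjump : ω t = Function.leftLim ω t
        · -- continuity point: the lower endpoint converges from the left
          have hleft : Tendsto ω (nhdsWithin t (Iic t)) (𝓝 (ω t)) := by
            obtain ⟨l, hl⟩ := hω.2 t ⟨h0pos, htT⟩
            have hne : (nhdsWithin t (Iio t)).NeBot := by infer_instance
            have hll : Function.leftLim ω t = l := leftLim_eq_of_tendsto hl
            have hl' : Tendsto ω (nhdsWithin t (Iio t)) (𝓝 (ω t)) := by
              rw [hjump, hll]; exact hl
            have hIic : Iic t = Iio t ∪ {t} := (Set.Iio_union_right).symm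
            rw [hIic, nhdsWithin_union]
            refine tendsto_sup.2 ⟨hl', ?_⟩
            rw [nhdsWithin_singleton]
            exact tendsto_pure_nhds ω t
          have hωlow : Tendsto (fun n => ω (P.t n (kbar T P n t))) atTop (𝓝 (ω t)) :=
            hleft.comp (tendsto_nhdsWithin_of_tendsto_nhds_of_eventually_within _ hlow
              (Eventually.of_forall fun n => hk1 n))
          have h4 := (((tendsto_const_nhds (x := ω t)).sub hωlow).pow 2).sub
            ((hωup.sub hωlow).pow 2)
          simpa using h4
        · -- jump point: eventually `t` is a partition point, so `tⁿ_{k̄} = t`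
          apply key
          obtain ⟨N, j, hjm, hjt⟩ := hexhaust t ⟨h0pos, htT⟩ hjump
          have hmem : ∀ n ≥ N, ∃ j ≤ P.m n, P.t n j = t := by
            intro n hn
            induction n, hn using Nat.le_induction with
            | base => exact ⟨j, hjm, hjt⟩
            | succ n hn ih =>
              obtain ⟨j', hj'm, hj't⟩ := ih
              obtain ⟨j'', h1, h2⟩ := hnested n j' hj'm
              exact ⟨j'', h1, h2.trans hj't⟩
          filter_upwards [eventually_ge_atTop N] with n hn
          obtain ⟨j', hj'm, hj't⟩ := hmem n hn
          have hj'lt : j' < P.m n := by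
            rcases eq_or_lt_of_le hj'm with h | h
            · exfalso; rw [h, P.last] at hj't
              exact (ne_of_lt htT') hj't.symm
            · exact h
          have hle : j' ≤ kbar T P n t := kbar_ge_of_mem T P n hj't hj'lt
          have hmono := PS.mono_le T P n hle (le_of_lt (hklt n))
          exact le_antisymm (hk1 n) (le_trans (le_of_eq hj't.symm) hmono)
  -- the sum identity
  have hsum : ∀ n, (∑ i ∈ Finset.range (P.m n),
        if P.t n i ≤ t then (ω (P.t n (i + 1)) - ω (P.t n i))^2 else 0)
      = (∑ i ∈ Finset.range (P.m n),
          (ω (min (P.t n (i + 1)) t) - ω (min (P.t n i) t))^2)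
        - ((ω t - ω (P.t n (kbar T P n t)))^2
            - (ω (P.t n (kbar T P n t + 1)) - ω (P.t n (kbar T P n t)))^2) := by
    intro n
    have key : ∑ i ∈ Finset.range (P.m n),
        ((if P.t n i ≤ t then (ω (P.t n (i + 1)) - ω (P.t n i))^2 else 0)
          - (ω (min (P.t n (i + 1)) t) - ω (min (P.t n i) t))^2)
        = (ω (P.t n (kbar T P n t + 1)) - ω (P.t n (kbar T P n t)))^2
          - (ω t - ω (P.t n (kbar T P n t)))^2 := by
      rw [Finset.sum_eq_single_of_mem (kbar T P n t) (Finset.mem_range.2 (hklt n))]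
      · rw [if_pos (hk1 n), min_eq_left (hk1 n), min_eq_right (hk2 n)]
      · intro i hi hne
        rcases lt_or_gt_of_ne hne with hlt | hgt
        · -- i < kbar
          have h1 : P.t n (i + 1) ≤ t :=
            le_trans (PS.mono_le T P n (Nat.succ_le_of_lt hlt) (le_of_lt (hklt n))) (hk1 n)
          have h2 : P.t n i ≤ t :=
            le_trans (PS.mono_le T P n (Nat.le_succ i) (Finset.mem_range.1 hi)) h1
          rw [if_pos h2, min_eq_left h1, min_eq_left h2]
          ring
        · -- kbar < i
          have h3 : t < P.t n i := kbar_greatest T P n hgt (Finset.mem_range.1 hi)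
          have h4 : t ≤ P.t n (i + 1) :=
            h3.le.trans (PS.mono_le T P n (Nat.le_succ i) (Finset.mem_range.1 hi))
          rw [if_neg (not_le.2 h3), min_eq_right h3.le, min_eq_right h4]
          ring
    rw [Finset.sum_sub_distrib] at key
    linarith [key]
  have hA : Tendsto (fun n => ∑ i ∈ Finset.range (P.m n),
      (ω (min (P.t n (i + 1)) t) - ω (min (P.t n i) t))^2) atTop (𝓝 (A t)) :=
    hunif.tendsto_at ⟨ht0, htT⟩
  have h1 := hA.sub hD
  rw [sub_zero] at h1
  exact ⟨h1.congr (fun n => (hsum n).symm), hD⟩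

end
end
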